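/- Incomparability of M and WS: There exists an argumentation framework (S,R) and a conflict-eliminable S₁ ⊆ S such that WS(S₁) ⊈ M(S₁), and there exists an argumentation framework (S',R') and a conflict-eliminable S₁' ⊆ S' such that M(S₁') ⊈ WS(S₁'). -/
import Mathlib


namespace CoalitionArg

/-- An argument: identifier paired with capacity. -/
abbrev Arg (A : Type*) := A × ℕ

variable {A : Type*}

/-- A coherent set of arguments: finite, positive capacities, and each
identifier occurs with at most one capacity. -/
def Coherent (S : Set (Arg A)) : Prop :=
  S.Finite ∧ (∀ p ∈ S, 0 < p.2) ∧ ∀ p ∈ S, ∀ q ∈ S, p.1 = q.1 → p.2 = q.2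

/-- Attack-strength functions are modelled as `Option ℕ`-valued functions;
`none` means undefined. -/
abbrev AttFun (A : Type*) := Set (Arg A) → Arg A → Option ℕ

/-- `R` is defined at `(T, s)`. -/
def RDef (R : AttFun A) (T : Set (Arg A)) (s : Arg A) : Prop := (R T s).isSome

/-- The eight axioms of an attack-strength function. -/
structure IsAttackStrength (R : AttFun A) : Prop where
  empty_undef : ∀ s, R ∅ s = none
  subset_def : ∀ S₁ S₂ s, RDef R S₁ s → S₂ ⊆ S₁ → S₂.Nonempty → RDef R S₂ s
  union_def : ∀ S₁ S₂ s, RDef R S₁ s → RDef R S₂ s → RDef R (S₁ ∪ S₂) s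
  pos : ∀ S₁ s n, R S₁ s = some n → 0 < n
  mono_source_cap : ∀ S₁ s a n m k, R S₁ s = some k → (a, n) ∈ S₁ → n ≤ m →
      ∃ k', R ((S₁ \ {(a, n)}) ∪ {(a, m)}) s = some k' ∧ k ≤ k'
  mono_source_inter : ∀ S₁ S₂ s k₁ k₂ k, R S₁ s = some k₁ → R S₂ s = some k₂ →
      R (S₁ ∩ S₂) s = some k → k ≤ k₁ ∧ k ≤ k₂
  mono_target : ∀ S₁ a n m k, R S₁ (a, n) = some k → (∀ p ∈ S₁, p.1 ≠ a) → n ≤ m →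
      ∃ k', R S₁ (a, m) = some k' ∧ k ≤ k'
  no_self : ∀ S₁ s, s ∈ S₁ → R S₁ s = none

/-- Attack-strength axioms without (2) quasi-closure by subsets and
(3) closure by union (for the restricted framework). -/
structure IsAttackStrengthRestr (R : AttFun A) : Prop where
  empty_undef : ∀ s, R ∅ s = none
  pos : ∀ S₁ s n, R S₁ s = some n → 0 < n
  mono_source_cap : ∀ S₁ s a n m k, R S₁ s = some k → (a, n) ∈ S₁ → n ≤ m →
      ∃ k', R ((S₁ \ {(a, n)}) ∪ {(a, m)}) s = some k' ∧ k ≤ k'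
  mono_source_inter : ∀ S₁ S₂ s k₁ k₂ k, R S₁ s = some k₁ → R S₂ s = some k₂ →
      R (S₁ ∩ S₂) s = some k → k ≤ k₁ ∧ k ≤ k₂
  mono_target : ∀ S₁ a n m k, R S₁ (a, n) = some k → (∀ p ∈ S₁, p.1 ≠ a) → n ≤ m →
      ∃ k', R S₁ (a, m) = some k' ∧ k ≤ k'
  no_self : ∀ S₁ s, s ∈ S₁ → R S₁ s = none

/-- An argumentation framework: a coherent set together with an
attack-strength function. -/
structure AF (A : Type*) where
  args : Set (Arg A)
  att : AttFun A
  coherent : Coherent args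
  isAtt : IsAttackStrength att

/-- `S₁` attacks `s`. -/
def Attacks (R : AttFun A) (S₁ : Set (Arg A)) (s : Arg A) : Prop :=
  ∃ S₂ ⊆ S₁, RDef R S₂ s

/-- `S₁` defeats `s`: it attacks `s`, and the maximum attack strength over
subsets of `S₁` reaches the capacity of `s`. -/
def Defeats (R : AttFun A) (S₁ : Set (Arg A)) (s : Arg A) : Prop :=
  Attacks R S₁ s ∧ ∃ S₂ ⊆ S₁, ∃ n, R S₂ s = some n ∧
    (∀ Sx ⊆ S₁, ∀ m, R Sx s = some m → m ≤ n) ∧ s.2 ≤ n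

/-- Maximum attack strength of `S₁` on `s` (0 when `S₁` does not attack `s`). -/
noncomputable def Vmax (R : AttFun A) (S₁ : Set (Arg A)) (s : Arg A) : ℕ :=
  sSup {n | ∃ S₂ ⊆ S₁, R S₂ s = some n}

/-- Conflict-eliminability: no member is defeated by the set itself.
(`α` is defined exactly on conflict-eliminable sets.) -/
def ConfElim (R : AttFun A) (S₁ : Set (Arg A)) : Prop := ∀ s ∈ S₁, ¬ Defeats R S₁ s

/-- The intrinsic arguments of `S₁`. -/
noncomputable def alpha (R : AttFun A) (S₁ : Set (Arg A)) : Set (Arg A) :=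
  (fun s => (s.1, s.2 - Vmax R S₁ s)) '' S₁

/-- The attacks occurring inside `S₁`. -/
def Del (R : AttFun A) (S₁ : Set (Arg A)) : Set (Set (Arg A) × Arg A) :=
  {p | p.2 ∈ S₁ ∧ p.1 ⊆ S₁ ∧ RDef R p.1 p.2}

open Classical in
/-- The attack-strength function of the view of `S₁`: `R` restricted off
`Del R S₁`. -/
noncomputable def viewAtt (R : AttFun A) (S₁ : Set (Arg A)) : AttFun A :=
  fun T s => if (T, s) ∈ Del R S₁ then none else R T s

/-- The argument set of the view of `S₁` about `S`. -/
noncomputable def viewArgs (R : AttFun A) (S S₁ : Set (Arg A)) : Set (Arg A) :=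
  (S \ S₁) ∪ alpha R S₁

/-- `S₁` c-attacks `s`. -/
def CAttacks (R : AttFun A) (S₁ : Set (Arg A)) (s : Arg A) : Prop :=
  ConfElim R S₁ ∧ ∃ S₂ ⊆ alpha R S₁, RDef (viewAtt R S₁) S₂ s

/-- `S₁` c-defeats `s`. -/
def CDefeats (R : AttFun A) (S₁ : Set (Arg A)) (s : Arg A) : Prop :=
  CAttacks R S₁ s ∧ ∃ S₃ ⊆ alpha R S₁, ∃ n, viewAtt R S₁ S₃ s = some n ∧ s.2 ≤ n

/-- c-admissibility of `S₁ ⊆ S`. -/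
def CAdmissible (R : AttFun A) (S S₁ : Set (Arg A)) : Prop :=
  ConfElim R S₁ ∧
  ∀ S₂ ⊆ viewArgs R S S₁, ∀ s ∈ S₁, Attacks R S₂ s →
    ∀ Sx ⊆ S₂, RDef R Sx s → ∃ sx ∈ Sx, CDefeats R S₁ sx

/-- c-preferredness of `S₁ ⊆ S`. -/
def CPreferred (R : AttFun A) (S S₁ : Set (Arg A)) : Prop :=
  CAdmissible R S S₁ ∧ ¬ ∃ Sy, S₁ ⊂ Sy ∧ Sy ⊆ S ∧ CAdmissible R S Sy

/-- `S₁` is one-directionally attacked. -/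
def OneDirAttacked (R : AttFun A) (S S₁ : Set (Arg A)) : Prop :=
  ConfElim R S₁ ∧ ∃ Sx ⊆ viewArgs R S S₁, (∃ s ∈ S₁, Attacks R Sx s) ∧
    ∀ sx ∈ Sx, ¬ CAttacks R S₁ sx

/-- The states relation `S₁ ≼ S₂`. -/
def StateLeq (R : AttFun A) (S S₁ S₂ : Set (Arg A)) : Prop :=
  ConfElim R S₁ ∧ ConfElim R S₂ ∧
  (CAdmissible R S S₂ ∨ OneDirAttacked R S S₁ ∨
    (¬ CAdmissible R S S₁ ∧ ¬ CAdmissible R S S₂ ∧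
     ¬ OneDirAttacked R S S₁ ∧ ¬ OneDirAttacked R S S₂))

/-- Coalition permission. -/
def CoalitionPermitted (R : AttFun A) (S₁ S₂ : Set (Arg A)) : Prop :=
  S₁ ∩ S₂ = ∅ ∧ ConfElim R (S₁ ∪ S₂)

/-- The attackers of `S₁` within `S`. -/
def Attacker (R : AttFun A) (S S₁ : Set (Arg A)) : Set (Arg A) :=
  {s ∈ S | ∃ s₁ ∈ S₁, Attacks R {s} s₁}

/-- Attackers of `S₁` that `Sx` neither c-defeats nor contains. -/
def UndefAtt (R : AttFun A) (S S₁ Sx : Set (Arg A)) : Set (Arg A) :=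
  {s ∈ Attacker R S S₁ | ¬ CDefeats R Sx s ∧ s ∉ Sx}

/-- The (fewer attackers) axiom for the pair `(S₁, S₂)`. -/
noncomputable def FewerAttackers (R : AttFun A) (S S₁ S₂ : Set (Arg A)) : Prop :=
  (UndefAtt R S S₁ S₂).ncard ≤ (UndefAtt R S S₁ S₁).ncard

/-- Coalition profitability `S₁ ⊴ S₂`. -/
noncomputable def Profitable (R : AttFun A) (S S₁ S₂ : Set (Arg A)) : Prop :=
  S₁ ⊆ S₂ ∧ StateLeq R S S₁ S₂ ∧ FewerAttackers R S S₁ S₂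

/-- `Max(S₁)`: maximal profitable extensions of `S₁` within `S`. -/
noncomputable def MaxSet (R : AttFun A) (S S₁ : Set (Arg A)) : Set (Set (Arg A)) :=
  {Sx | Sx ⊆ S ∧ Profitable R S S₁ Sx ∧
    ∀ Sy, Sx ⊂ Sy → Sy ⊆ S → ¬ Profitable R S S₁ Sy}

open Classical in
/-- State rank: 2 for c-admissible, 0 for one-directionally attacked, 1 otherwise. -/
noncomputable def stateRank (R : AttFun A) (S S₁ : Set (Arg A)) : ℕ :=
  if CAdmissible R S S₁ then 2 else if OneDirAttacked R S S₁ then 0 else 1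

/-- Number of external undefeated attackers of `Sx`. -/
noncomputable def extAttCount (R : AttFun A) (S Sx : Set (Arg A)) : ℕ :=
  (UndefAtt R S Sx Sx).ncard

/-- The three comparison criteria: set size, state, external attackers. -/
inductive Crit | l | b | f

/-- `≤_β` for `β ∈ {l, b, f}`. -/
noncomputable def critLe (R : AttFun A) (S : Set (Arg A)) :
    Crit → Set (Arg A) → Set (Arg A) → Prop
  | .l, S₁, S₂ => S₁.ncard ≤ S₂.ncard
  | .b, S₁, S₂ => stateRank R S S₁ ≤ stateRank R S S₂
  | .f, S₁, S₂ => extAttCount R S S₂ ≤ extAttCount R S S₁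

/-- `<_β`. -/
noncomputable def critLt (R : AttFun A) (S : Set (Arg A))
    (c : Crit) (S₁ S₂ : Set (Arg A)) : Prop :=
  critLe R S c S₁ S₂ ∧ ¬ critLe R S c S₂ S₁

/-- Maximal profitability `S₁ ⊴_m S₂`. -/
noncomputable def ProfitableM (R : AttFun A) (S S₁ S₂ : Set (Arg A)) : Prop :=
  Profitable R S S₁ S₂ ∧ ∃ Sx ∈ MaxSet R S S₂, ∀ Sy ∈ MaxSet R S S₁,
    ∀ β : Crit, critLt R S β Sx Sy → ∃ γ : Crit, γ ≠ β ∧ critLt R S γ Sy Sx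

/-- The coalition formability semantics `W`. -/
noncomputable def Wsem (R : AttFun A) (S S₁ : Set (Arg A)) : Set (Set (Arg A)) :=
  {S₂ | S₂ ⊆ S ∧ (Profitable R S S₁ (S₁ ∪ S₂) ∨ Profitable R S S₂ (S₁ ∪ S₂))}

/-- The coalition formability semantics `M`. -/
noncomputable def Msem (R : AttFun A) (S S₁ : Set (Arg A)) : Set (Set (Arg A)) :=
  {S₂ | S₂ ⊆ S ∧ Profitable R S S₁ (S₁ ∪ S₂) ∧ Profitable R S S₂ (S₁ ∪ S₂)}

/-- The coalition formability semantics `WS`. -/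
noncomputable def WSsem (R : AttFun A) (S S₁ : Set (Arg A)) : Set (Set (Arg A)) :=
  {S₂ | S₂ ⊆ S ∧ (ProfitableM R S S₁ (S₁ ∪ S₂) ∨ ProfitableM R S S₂ (S₁ ∪ S₂))}

/-- The coalition formability semantics `S`. -/
noncomputable def Ssem (R : AttFun A) (S S₁ : Set (Arg A)) : Set (Set (Arg A)) :=
  {S₂ | S₂ ⊆ S ∧ ProfitableM R S S₁ (S₁ ∪ S₂) ∧ ProfitableM R S S₂ (S₁ ∪ S₂)}

/-- Weak continuity of `⊴` for `S₁`. -/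
noncomputable def WeaklyContinuous (R : AttFun A) (S S₁ : Set (Arg A)) : Prop :=
  ∃ Sz ∈ MaxSet R S S₁, ∀ Sw ⊆ Sz,
    CoalitionPermitted R S₁ (Sw \ S₁) → Profitable R S S₁ Sw

/-! Nielsen–Parsons argumentation frameworks. -/

/-- `A₁` NP-attacks `a` in the NP framework with attack relation `G`. -/
def NPattacks (G : Set (Set (Arg A) × Arg A)) (A₁ : Set (Arg A)) (a : Arg A) : Prop :=
  ∃ A' ⊆ A₁, (A', a) ∈ G

/-- `(Ax, a) ∈ G` is minimal. -/
def NPminimal (G : Set (Set (Arg A) × Arg A)) (Ax : Set (Arg A)) (a : Arg A) : Prop :=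
  (Ax, a) ∈ G ∧ ∀ A'', A'' ⊂ Ax → (A'', a) ∉ G

/-- NP-conflict-freeness. -/
def NPconflictFree (G : Set (Set (Arg A) × Arg A)) (A₁ : Set (Arg A)) : Prop :=
  ∀ a ∈ A₁, ¬ NPattacks G A₁ a

/-- `A₁` NP-defends `a` within `S`. -/
def NPdefends (G : Set (Set (Arg A) × Arg A)) (S A₁ : Set (Arg A)) (a : Arg A) : Prop :=
  ∀ Ax ⊆ S, NPminimal G Ax a → ∃ ax ∈ Ax, NPattacks G A₁ ax

/-- NP-admissibility. -/
def NPadmissible (G : Set (Set (Arg A) × Arg A)) (S A₁ : Set (Arg A)) : Prop :=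
  A₁ ⊆ S ∧ NPconflictFree G A₁ ∧ ∀ a ∈ A₁, NPdefends G S A₁ a

/-- NP-preferredness. -/
def NPpreferred (G : Set (Set (Arg A) × Arg A)) (S A₁ : Set (Arg A)) : Prop :=
  NPadmissible G S A₁ ∧ ¬ ∃ A₂, A₁ ⊂ A₂ ∧ A₂ ⊆ S ∧ NPadmissible G S A₂

/-- `(S, G)` is a Nielsen–Parsons argumentation framework. -/
def IsNPFramework (S : Set (Arg A)) (G : Set (Set (Arg A) × Arg A)) : Prop :=
  S.Finite ∧ ∀ p ∈ G, p.1.Nonempty ∧ p.1 ⊆ S ∧ p.2 ∈ S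

end CoalitionArg
namespace CoalitionArg

variable {A : Type*}

open Classical in
/-- Attack function generated by an edge relation `E` on identifiers, with
`SE ⊆ E` the strong edges (strength 2 when the attacker has capacity ≥ 2). -/
noncomputable def edgeR (E SE : A → A → Prop) : AttFun A :=
  fun T s =>
    if T.Nonempty ∧ ∀ p ∈ T, 0 < p.2 ∧ E p.1 s.1 then
      some (if ∃ p ∈ T, SE p.1 s.1 ∧ 2 ≤ p.2 then 2 else 1)
    else none

variable {E SE : A → A → Prop}

open Classical in
lemma edgeR_eq_some_iff {T : Set (Arg A)} {s : Arg A} {n : ℕ} :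
    edgeR E SE T s = some n ↔
      (T.Nonempty ∧ ∀ p ∈ T, 0 < p.2 ∧ E p.1 s.1) ∧
        n = (if ∃ p ∈ T, SE p.1 s.1 ∧ 2 ≤ p.2 then 2 else 1) := by
  by_cases h : T.Nonempty ∧ ∀ p ∈ T, 0 < p.2 ∧ E p.1 s.1
  · unfold edgeR
    rw [if_pos h, Option.some.injEq]
    constructor
    · intro he; exact ⟨h, he.symm⟩
    · rintro ⟨-, rfl⟩; rfl
  · unfold edgeR
    rw [if_neg h]
    constructor
    · intro he; exact absurd he (by simp)
    · rintro ⟨hc, -⟩; exact absurd hc h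

lemma edgeR_isSome_iff {T : Set (Arg A)} {s : Arg A} :
    RDef (edgeR E SE) T s ↔ T.Nonempty ∧ ∀ p ∈ T, 0 < p.2 ∧ E p.1 s.1 := by
  rw [RDef, Option.isSome_iff_exists]
  constructor
  · rintro ⟨n, hn⟩; exact (edgeR_eq_some_iff.mp hn).1
  · intro h; exact ⟨_, edgeR_eq_some_iff.mpr ⟨h, rfl⟩⟩

lemma edgeR_eq_one {T : Set (Arg A)} {s : Arg A} (h1 : T.Nonempty)
    (h2 : ∀ p ∈ T, 0 < p.2 ∧ E p.1 s.1) (h3 : ∀ p ∈ T, ¬(SE p.1 s.1 ∧ 2 ≤ p.2)) :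
    edgeR E SE T s = some 1 := by
  rw [edgeR_eq_some_iff]
  refine ⟨⟨h1, h2⟩, ?_⟩
  rw [if_neg]; rintro ⟨p, hp, hsp⟩; exact h3 p hp hsp

lemma edgeR_eq_two {T : Set (Arg A)} {s : Arg A} {p : Arg A} (hp : p ∈ T)
    (hstrong : SE p.1 s.1 ∧ 2 ≤ p.2) (h2 : ∀ q ∈ T, 0 < q.2 ∧ E q.1 s.1) :
    edgeR E SE T s = some 2 := by
  rw [edgeR_eq_some_iff]
  exact ⟨⟨⟨p, hp⟩, h2⟩, by rw [if_pos ⟨p, hp, hstrong⟩]⟩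

lemma edgeR_val_cases {T : Set (Arg A)} {s : Arg A} {n : ℕ}
    (h : edgeR E SE T s = some n) :
    n = 1 ∨ (n = 2 ∧ ∃ p ∈ T, SE p.1 s.1 ∧ 2 ≤ p.2) := by
  obtain ⟨-, hval⟩ := edgeR_eq_some_iff.mp h
  by_cases hc : ∃ p ∈ T, SE p.1 s.1 ∧ 2 ≤ p.2
  · rw [if_pos hc] at hval; exact Or.inr ⟨hval, hc⟩
  · rw [if_neg hc] at hval; exact Or.inl hval

lemma edgeR_le_two {T : Set (Arg A)} {s : Arg A} {n : ℕ}
    (h : edgeR E SE T s = some n) : n ≤ 2 := by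
  rcases edgeR_val_cases h with rfl | ⟨rfl, -⟩ <;> omega

lemma edgeR_pos {T : Set (Arg A)} {s : Arg A} {n : ℕ}
    (h : edgeR E SE T s = some n) : 0 < n := by
  rcases edgeR_val_cases h with rfl | ⟨rfl, -⟩ <;> omega

theorem isAttackStrength_edgeR (hirr : ∀ a, ¬ E a a) :
    IsAttackStrength (edgeR E SE) := by
  constructor
  · intro s
    unfold edgeR; rw [if_neg]; rintro ⟨⟨x, hx⟩, -⟩; exact hx
  · intro S₁ S₂ s h hsub hne
    rw [edgeR_isSome_iff] at h ⊢
    exact ⟨hne, fun p hp => h.2 p (hsub hp)⟩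
  · intro S₁ S₂ s h1 h2
    rw [edgeR_isSome_iff] at h1 h2 ⊢
    refine ⟨h1.1.mono Set.subset_union_left, ?_⟩
    rintro p (hp | hp)
    · exact h1.2 p hp
    · exact h2.2 p hp
  · intro S₁ s n h; exact edgeR_pos h
  · intro S₁ s a n m k hk ha hnm
    obtain ⟨⟨hne, hall⟩, hval⟩ := edgeR_eq_some_iff.mp hk
    have hdef : ∀ p ∈ (S₁ \ {(a, n)}) ∪ {(a, m)}, 0 < p.2 ∧ E p.1 s.1 := by
      rintro p (⟨hp, -⟩ | hp)
      · exact hall p hp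
      · rw [Set.mem_singleton_iff] at hp; subst hp
        exact ⟨lt_of_lt_of_le (hall _ ha).1 hnm, (hall _ ha).2⟩
    have hne' : ((S₁ \ {(a, n)}) ∪ {(a, m)}).Nonempty :=
      ⟨(a, m), Or.inr rfl⟩
    classical
    refine ⟨if ∃ p ∈ (S₁ \ {(a, n)}) ∪ {(a, m)}, SE p.1 s.1 ∧ 2 ≤ p.2 then 2 else 1,
      edgeR_eq_some_iff.mpr ⟨⟨hne', hdef⟩, rfl⟩, ?_⟩
    subst hval
    split_ifs with h1 h2
    · omega
    · exfalso; apply h2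
      obtain ⟨p, hp, hsp⟩ := h1
      by_cases hpa : p = (a, n)
      · subst hpa
        exact ⟨(a, m), Or.inr rfl, hsp.1, le_trans hsp.2 hnm⟩
      · exact ⟨p, Or.inl ⟨hp, hpa⟩, hsp⟩
    · omega
    · omega
  · intro S₁ S₂ s k₁ k₂ k h1 h2 h
    rcases edgeR_val_cases h with rfl | ⟨rfl, p, hp, hsp⟩
    · exact ⟨edgeR_pos h1, edgeR_pos h2⟩
    · constructor
      · have := edgeR_eq_two hp.1 hsp (edgeR_eq_some_iff.mp h1).1.2
        rw [this] at h1; injection h1 with h1'; omega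
      · have := edgeR_eq_two hp.2 hsp (edgeR_eq_some_iff.mp h2).1.2
        rw [this] at h2; injection h2 with h2'; omega
  · intro S₁ a n m k hk hne hnm
    refine ⟨k, ?_, le_refl k⟩
    rw [edgeR_eq_some_iff] at hk ⊢
    exact hk
  · intro S₁ s hs
    unfold edgeR; rw [if_neg]
    rintro ⟨-, hall⟩
    exact hirr s.1 (hall s hs).2

lemma attacks_iff {X : Set (Arg A)} {s : Arg A} :
    Attacks (edgeR E SE) X s ↔ ∃ p ∈ X, 0 < p.2 ∧ E p.1 s.1 := by
  constructor
  · rintro ⟨S₂, hsub, hdef⟩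
    rw [edgeR_isSome_iff] at hdef
    obtain ⟨⟨p, hp⟩, hall⟩ := hdef
    exact ⟨p, hsub hp, hall p hp⟩
  · rintro ⟨p, hp, h⟩
    refine ⟨{p}, Set.singleton_subset_iff.mpr hp, edgeR_isSome_iff.mpr ⟨⟨p, rfl⟩, ?_⟩⟩
    rintro q hq; rw [Set.mem_singleton_iff] at hq; subst hq; exact h

lemma not_attacks {X : Set (Arg A)} {s : Arg A}
    (h : ∀ p ∈ X, ¬(0 < p.2 ∧ E p.1 s.1)) : ¬ Attacks (edgeR E SE) X s := by
  rw [attacks_iff]; rintro ⟨p, hp, hpp⟩; exact h p hp hpp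

lemma vmax_eq_zero {X : Set (Arg A)} {s : Arg A}
    (h : ∀ p ∈ X, ¬(0 < p.2 ∧ E p.1 s.1)) : Vmax (edgeR E SE) X s = 0 := by
  unfold Vmax
  have he : {n | ∃ S₂ ⊆ X, edgeR E SE S₂ s = some n} = ∅ := by
    rw [Set.eq_empty_iff_forall_notMem]
    rintro n ⟨S₂, hsub, heq⟩
    obtain ⟨⟨⟨p, hp⟩, hall⟩, -⟩ := edgeR_eq_some_iff.mp heq
    exact h p (hsub hp) (hall p hp)
  rw [he]; exact csSup_empty

lemma vmax_eq_one {X : Set (Arg A)} {s : Arg A} {p : Arg A} (hp : p ∈ X)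
    (hpp : 0 < p.2 ∧ E p.1 s.1) (h2 : ∀ q ∈ X, ¬(SE q.1 s.1 ∧ 2 ≤ q.2)) :
    Vmax (edgeR E SE) X s = 1 := by
  unfold Vmax
  have he : {n | ∃ S₂ ⊆ X, edgeR E SE S₂ s = some n} = {1} := by
    ext n
    constructor
    · rintro ⟨S₂, hsub, heq⟩
      rcases edgeR_val_cases heq with rfl | ⟨rfl, q, hq, hsq⟩
      · rfl
      · exact absurd hsq (h2 q (hsub hq))
    · rintro rfl
      refine ⟨{p}, Set.singleton_subset_iff.mpr hp, edgeR_eq_one ⟨p, rfl⟩ ?_ ?_⟩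
      · rintro q hq; rw [Set.mem_singleton_iff] at hq; subst hq; exact hpp
      · rintro q hq; rw [Set.mem_singleton_iff] at hq; subst hq; exact h2 _ hp
  rw [he, csSup_singleton]

lemma defeats_of_strong {X : Set (Arg A)} {s : Arg A} {p : Arg A} (hp : p ∈ X)
    (hE : E p.1 s.1) (hSE : SE p.1 s.1) (h2 : 2 ≤ p.2) (hcap : s.2 ≤ 2) :
    Defeats (edgeR E SE) X s := by
  have hone : ∀ q ∈ ({p} : Set (Arg A)), 0 < q.2 ∧ E q.1 s.1 := by
    rintro q hq; rw [Set.mem_singleton_iff] at hq; subst hq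
    exact ⟨by omega, hE⟩
  refine ⟨attacks_iff.mpr ⟨p, hp, by omega, hE⟩,
    {p}, Set.singleton_subset_iff.mpr hp, 2, edgeR_eq_two rfl ⟨hSE, h2⟩ hone,
    fun Sx _ m hm => edgeR_le_two hm, hcap⟩

lemma not_defeats_of_no_strong {X : Set (Arg A)} {s : Arg A}
    (h : ∀ p ∈ X, ¬(SE p.1 s.1 ∧ 2 ≤ p.2)) (hcap : 2 ≤ s.2) :
    ¬ Defeats (edgeR E SE) X s := by
  rintro ⟨-, S₂, hsub, n, heq, -, hle⟩
  rcases edgeR_val_cases heq with rfl | ⟨rfl, p, hp, hsp⟩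
  · omega
  · exact h p (hsub hp) hsp

lemma not_defeats_of_no_att {X : Set (Arg A)} {s : Arg A}
    (h : ∀ p ∈ X, ¬(0 < p.2 ∧ E p.1 s.1)) : ¬ Defeats (edgeR E SE) X s := by
  rintro ⟨hatt, -⟩; exact not_attacks h hatt

lemma viewAtt_some {R : AttFun A} {X T : Set (Arg A)} {s : Arg A} {n : ℕ}
    (h : viewAtt R X T s = some n) : R T s = some n := by
  unfold viewAtt at h
  split_ifs at h
  exact h

lemma viewAtt_of_notMem {R : AttFun A} {X T : Set (Arg A)} {s : Arg A}
    (hs : s ∉ X) : viewAtt R X T s = R T s := by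
  unfold viewAtt
  rw [if_neg]
  exact fun hDel => hs hDel.1

lemma cdefeats_of_strong {X : Set (Arg A)} {s q : Arg A}
    (hconf : ConfElim (edgeR E SE) X) (hq : q ∈ alpha (edgeR E SE) X)
    (hE : E q.1 s.1) (hSE : SE q.1 s.1) (h2 : 2 ≤ q.2) (hs : s ∉ X)
    (hcap : s.2 ≤ 2) : CDefeats (edgeR E SE) X s := by
  have hone : ∀ r ∈ ({q} : Set (Arg A)), 0 < r.2 ∧ E r.1 s.1 := by
    rintro r hr; rw [Set.mem_singleton_iff] at hr; subst hr
    exact ⟨by omega, hE⟩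
  have hval : edgeR E SE {q} s = some 2 := edgeR_eq_two rfl ⟨hSE, h2⟩ hone
  have hview : viewAtt (edgeR E SE) X {q} s = some 2 := by
    rw [viewAtt_of_notMem hs]; exact hval
  refine ⟨⟨hconf, {q}, Set.singleton_subset_iff.mpr hq, ?_⟩,
    {q}, Set.singleton_subset_iff.mpr hq, 2, hview, hcap⟩
  rw [RDef, hview]; rfl

lemma not_cattacks {X : Set (Arg A)} {s : Arg A}
    (h : ∀ q ∈ alpha (edgeR E SE) X, ¬(0 < q.2 ∧ E q.1 s.1)) :
    ¬ CAttacks (edgeR E SE) X s := by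
  rintro ⟨-, S₂, hsub, hdef⟩
  rw [RDef, Option.isSome_iff_exists] at hdef
  obtain ⟨n, hn⟩ := hdef
  obtain ⟨⟨⟨p, hp⟩, hall⟩, -⟩ := edgeR_eq_some_iff.mp (viewAtt_some hn)
  exact h p (hsub hp) (hall p hp)

lemma not_cdefeats_of_not_cattacks {R : AttFun A} {X : Set (Arg A)} {s : Arg A}
    (h : ¬ CAttacks R X s) : ¬ CDefeats R X s := fun hd => h hd.1

lemma not_cdefeats_of_no_strong {X : Set (Arg A)} {s : Arg A}
    (h : ∀ q ∈ alpha (edgeR E SE) X, ¬(SE q.1 s.1 ∧ 2 ≤ q.2)) (hcap : 2 ≤ s.2) :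
    ¬ CDefeats (edgeR E SE) X s := by
  rintro ⟨-, S₃, hsub, n, hv, hn⟩
  rcases edgeR_val_cases (viewAtt_some hv) with rfl | ⟨rfl, p, hp, hsp⟩
  · omega
  · exact h p (hsub hp) hsp

lemma onedir_of {R : AttFun A} {S X : Set (Arg A)} {sx s : Arg A}
    (hconf : ConfElim R X) (hmem : sx ∈ viewArgs R S X) (hs : s ∈ X)
    (hatt : Attacks R {sx} s) (hnc : ¬ CAttacks R X sx) :
    OneDirAttacked R S X := by
  refine ⟨hconf, {sx}, Set.singleton_subset_iff.mpr hmem, ⟨s, hs, hatt⟩, ?_⟩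
  rintro y hy; rw [Set.mem_singleton_iff] at hy; subst hy; exact hnc

lemma stateLeq_of_onedir {R : AttFun A} {S X Y : Set (Arg A)}
    (h : OneDirAttacked R S X) (hY : ConfElim R Y) : StateLeq R S X Y :=
  ⟨h.1, hY, Or.inr (Or.inl h)⟩

lemma confElim_of_profitable {R : AttFun A} {S X Y : Set (Arg A)}
    (h : Profitable R S X Y) : ConfElim R Y := h.2.1.2.1

lemma undefAtt_self_empty {R : AttFun A} {S X : Set (Arg A)} :
    UndefAtt R S X S = ∅ := by
  rw [Set.eq_empty_iff_forall_notMem]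
  rintro s ⟨⟨hS, -⟩, -, hns⟩
  exact hns hS

lemma critLe_refl {R : AttFun A} {S : Set (Arg A)} {β : Crit} {X : Set (Arg A)} :
    critLe R S β X X := by
  cases β
  · exact le_refl _
  · exact le_refl _
  · exact le_refl _

lemma not_critLt_self {R : AttFun A} {S : Set (Arg A)} {β : Crit} {X : Set (Arg A)} :
    ¬ critLt R S β X X := fun h => h.2 critLe_refl


lemma attacks_singleton_iff {p s : Arg A} :
    Attacks (edgeR E SE) {p} s ↔ 0 < p.2 ∧ E p.1 s.1 := by
  rw [attacks_iff]
  simp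

lemma mem_undefAtt_iff {S X Y : Set (Arg A)} {s : Arg A} :
    s ∈ UndefAtt (edgeR E SE) S X Y ↔
      (s ∈ S ∧ ∃ s₁ ∈ X, 0 < s.2 ∧ E s.1 s₁.1) ∧
        ¬ CDefeats (edgeR E SE) Y s ∧ s ∉ Y := by
  unfold UndefAtt Attacker
  simp only [Set.mem_setOf_eq, attacks_singleton_iff]


end CoalitionArg
namespace CoalitionArg
namespace Dir1

def E1 : ℕ → ℕ → Prop := fun x y => x = 1 ∧ y = 0
def SE1 : ℕ → ℕ → Prop := fun _ _ => False
noncomputable def R1 : AttFun ℕ := edgeR E1 SE1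
def SA : Set (Arg ℕ) := {(0, 2), (1, 1)}
def SA1 : Set (Arg ℕ) := {(0, 2)}

lemma att1 : IsAttackStrength R1 :=
  isAttackStrength_edgeR (by rintro a ⟨h1, h2⟩; omega)

lemma coh1 : Coherent SA := by
  refine ⟨?_, ?_, ?_⟩
  · show (insert ((0:ℕ),2) {((1:ℕ),1)} : Set (Arg ℕ)).Finite
    exact (Set.finite_singleton _).insert _
  · rintro p hp
    simp only [SA, Set.mem_insert_iff, Set.mem_singleton_iff] at hp
    rcases hp with rfl | rfl <;> norm_num
  · rintro p hp q hq h
    simp only [SA, Set.mem_insert_iff, Set.mem_singleton_iff] at hp hq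
    rcases hp with rfl | rfl <;> rcases hq with rfl | rfl <;> simp_all

lemma ce_SA1 : ConfElim R1 SA1 := by
  rintro s hs
  simp only [SA1, Set.mem_singleton_iff] at hs; subst hs
  refine not_defeats_of_no_att ?_
  rintro p hp
  simp only [SA1, Set.mem_singleton_iff] at hp; subst hp
  simp [E1]

lemma ce_SA : ConfElim R1 SA := by
  rintro s hs
  simp only [SA, Set.mem_insert_iff, Set.mem_singleton_iff] at hs
  rcases hs with rfl | rfl
  · exact not_defeats_of_no_strong (by rintro p hp ⟨hse, -⟩; exact hse) (by norm_num)
  · refine not_defeats_of_no_att ?_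
    rintro p hp
    simp only [SA, Set.mem_insert_iff, Set.mem_singleton_iff] at hp
    rcases hp with rfl | rfl <;> simp [E1]

lemma alpha_SA1 : alpha R1 SA1 = SA1 := by
  have hv : Vmax R1 SA1 ((0:ℕ), 2) = 0 := by
    refine vmax_eq_zero ?_
    rintro p hp
    simp only [SA1, Set.mem_singleton_iff] at hp; subst hp
    simp [E1]
  show (fun s => (s.1, s.2 - Vmax R1 SA1 s)) '' {((0:ℕ), 2)} = SA1
  rw [Set.image_singleton]
  simp only [hv]
  rfl

lemma hview_c : ((1:ℕ), 1) ∈ viewArgs R1 SA SA1 :=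
  Or.inl ⟨Set.mem_insert_iff.mpr (Or.inr rfl), by
    simp only [SA1, Set.mem_singleton_iff, Prod.mk.injEq]
    norm_num⟩

lemma att_c_a : Attacks R1 {((1:ℕ), 1)} ((0:ℕ), 2) :=
  attacks_iff.mpr ⟨(1, 1), rfl, by norm_num, by simp [E1]⟩

lemma nca_SA1_c : ¬ CAttacks R1 SA1 ((1:ℕ), 1) := by
  refine not_cattacks ?_
  rintro q hq
  rw [show alpha (edgeR E1 SE1) SA1 = SA1 from alpha_SA1] at hq
  simp only [SA1, Set.mem_singleton_iff] at hq; subst hq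
  simp [E1]

lemma od_SA1 : OneDirAttacked R1 SA SA1 :=
  onedir_of ce_SA1 hview_c rfl att_c_a nca_SA1_c

lemma prof_refl : Profitable R1 SA SA1 SA1 :=
  ⟨subset_rfl, stateLeq_of_onedir od_SA1 ce_SA1, le_refl _⟩

lemma prof_SA : Profitable R1 SA SA1 SA := by
  refine ⟨?_, stateLeq_of_onedir od_SA1 ce_SA, ?_⟩
  · exact Set.singleton_subset_iff.mpr (Set.mem_insert _ _)
  · show (UndefAtt R1 SA SA1 SA).ncard ≤ _
    rw [undefAtt_self_empty]
    simp

lemma max_SA : SA ∈ MaxSet R1 SA SA1 :=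
  ⟨subset_rfl, prof_SA, fun Sy hss hsub _ =>
    hss.ne ((subset_antisymm hsub hss.subset).symm)⟩

lemma profM : ProfitableM R1 SA SA1 SA1 := by
  refine ⟨prof_refl, SA, max_SA, ?_⟩
  rintro Sy hSy β hlt
  have h : Sy = SA := by
    by_contra hne
    exact hSy.2.2 SA (ssubset_of_subset_of_ne hSy.1 hne) subset_rfl prof_SA
  rw [h] at hlt
  exact absurd hlt not_critLt_self

lemma mem_WS : (∅ : Set (Arg ℕ)) ∈ WSsem R1 SA SA1 :=
  ⟨Set.empty_subset _, Or.inl (by rw [Set.union_empty]; exact profM)⟩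

lemma rdef_c : RDef R1 {((1:ℕ), 1)} ((0:ℕ), 2) := by
  refine edgeR_isSome_iff.mpr ⟨⟨_, rfl⟩, ?_⟩
  rintro p hp
  rw [Set.mem_singleton_iff] at hp; subst hp
  exact ⟨one_pos, by simp [E1]⟩

lemma notMem_M : (∅ : Set (Arg ℕ)) ∉ Msem R1 SA SA1 := by
  rintro ⟨-, -, hprof⟩
  rw [Set.union_empty] at hprof
  obtain ⟨-, hsl, -⟩ := hprof
  obtain ⟨-, -, hd⟩ := hsl
  rcases hd with hadm | hod | ⟨hne, -, -, -⟩
  · obtain ⟨sx, hsx, hcd⟩ := hadm.2 {((1:ℕ), 1)}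
      (Set.singleton_subset_iff.mpr hview_c) ((0:ℕ), 2) rfl att_c_a
      {((1:ℕ), 1)} subset_rfl rdef_c
    rw [Set.mem_singleton_iff] at hsx; subst hsx
    exact nca_SA1_c hcd.1
  · obtain ⟨-, Sx, -, ⟨s, hs, -⟩, -⟩ := hod
    exact Set.notMem_empty s hs
  · exact hne ⟨fun s hs => absurd hs (Set.notMem_empty s),
      fun S₂ _ s hs => absurd hs (Set.notMem_empty s)⟩

lemma dir1 : ∃ (F : AF ℕ) (S₁ : Set (Arg ℕ)),
    S₁ ⊆ F.args ∧ ConfElim F.att S₁ ∧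
    ¬ WSsem F.att F.args S₁ ⊆ Msem F.att F.args S₁ :=
  ⟨⟨SA, R1, coh1, att1⟩, SA1,
    Set.singleton_subset_iff.mpr (Set.mem_insert _ _), ce_SA1,
    fun h => notMem_M (h mem_WS)⟩

end Dir1
end CoalitionArg
namespace CoalitionArg
namespace Dir2

def E2 : ℕ → ℕ → Prop := fun x y =>
  (x = 2 ∧ y = 0) ∨ (x = 5 ∧ y = 0) ∨ (x = 3 ∧ y = 1) ∨ (x = 4 ∧ y = 1) ∨
  (x = 0 ∧ y = 3) ∨ (x = 1 ∧ y = 2)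

def SE2 : ℕ → ℕ → Prop := fun x y => (x = 0 ∧ y = 3) ∨ (x = 1 ∧ y = 2)

noncomputable def R2 : AttFun ℕ := edgeR E2 SE2

def SB : Set (Arg ℕ) := {(0,2),(1,2),(2,2),(3,2),(4,1),(5,1)}
def P1 : Set (Arg ℕ) := {(0,2)}
def P2 : Set (Arg ℕ) := {(1,2)}
def UU : Set (Arg ℕ) := {(0,2),(1,2)}
def TA : Set (Arg ℕ) := {(0,2),(1,2),(4,1),(5,1)}
def TB : Set (Arg ℕ) := {(0,2),(2,2),(4,1),(5,1)}
def TC : Set (Arg ℕ) := {(1,2),(3,2),(4,1),(5,1)}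

lemma att2 : IsAttackStrength R2 :=
  isAttackStrength_edgeR (by rintro a h; simp only [E2] at h; omega)

lemma coh2 : Coherent SB := by
  refine ⟨?_, ?_, ?_⟩
  · show (insert ((0:ℕ),2) _ : Set (Arg ℕ)).Finite
    exact Set.Finite.insert _ (Set.Finite.insert _ (Set.Finite.insert _
      (Set.Finite.insert _ ((Set.finite_singleton _).insert _))))
  · rintro p hp
    simp only [SB, Set.mem_insert_iff, Set.mem_singleton_iff] at hp
    rcases hp with rfl | rfl | rfl | rfl | rfl | rfl <;> norm_num
  · rintro p hp q hq h
    simp only [SB, Set.mem_insert_iff, Set.mem_singleton_iff] at hp hq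
    rcases hp with rfl | rfl | rfl | rfl | rfl | rfl <;>
      rcases hq with rfl | rfl | rfl | rfl | rfl | rfl <;> simp_all

/- memberships -/
lemma m0SB : ((0:ℕ),2) ∈ SB := by simp [SB]
lemma m1SB : ((1:ℕ),2) ∈ SB := by simp [SB]
lemma m2SB : ((2:ℕ),2) ∈ SB := by simp [SB]
lemma m3SB : ((3:ℕ),2) ∈ SB := by simp [SB]
lemma m4SB : ((4:ℕ),1) ∈ SB := by simp [SB]
lemma m5SB : ((5:ℕ),1) ∈ SB := by simp [SB]

lemma subP1SB : P1 ⊆ SB := by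
  rintro p hp
  simp only [P1, Set.mem_singleton_iff] at hp; subst hp; exact m0SB
lemma subP2SB : P2 ⊆ SB := by
  rintro p hp
  simp only [P2, Set.mem_singleton_iff] at hp; subst hp; exact m1SB
lemma subUUSB : UU ⊆ SB := by
  rintro p hp
  simp only [UU, Set.mem_insert_iff, Set.mem_singleton_iff] at hp
  rcases hp with rfl | rfl
  exacts [m0SB, m1SB]
lemma subTASB : TA ⊆ SB := by
  rintro p hp
  simp only [TA, Set.mem_insert_iff, Set.mem_singleton_iff] at hp
  rcases hp with rfl | rfl | rfl | rfl
  exacts [m0SB, m1SB, m4SB, m5SB]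
lemma subTBSB : TB ⊆ SB := by
  rintro p hp
  simp only [TB, Set.mem_insert_iff, Set.mem_singleton_iff] at hp
  rcases hp with rfl | rfl | rfl | rfl
  exacts [m0SB, m2SB, m4SB, m5SB]
lemma subTCSB : TC ⊆ SB := by
  rintro p hp
  simp only [TC, Set.mem_insert_iff, Set.mem_singleton_iff] at hp
  rcases hp with rfl | rfl | rfl | rfl
  exacts [m1SB, m3SB, m4SB, m5SB]

/- conflict eliminability -/
lemma ce_P1 : ConfElim R2 P1 := by
  rintro s hs
  simp only [P1, Set.mem_singleton_iff] at hs; subst hs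
  refine not_defeats_of_no_att ?_
  rintro p hp
  simp only [P1, Set.mem_singleton_iff] at hp; subst hp
  simp [E2]

lemma ce_P2 : ConfElim R2 P2 := by
  rintro s hs
  simp only [P2, Set.mem_singleton_iff] at hs; subst hs
  refine not_defeats_of_no_att ?_
  rintro p hp
  simp only [P2, Set.mem_singleton_iff] at hp; subst hp
  simp [E2]

lemma ce_UU : ConfElim R2 UU := by
  rintro s hs
  simp only [UU, Set.mem_insert_iff, Set.mem_singleton_iff] at hs
  have hnoatt : ∀ t : Arg ℕ, (∀ p ∈ UU, ¬(0 < p.2 ∧ E2 p.1 t.1)) →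
      ¬ Defeats R2 UU t := fun t h => not_defeats_of_no_att h
  rcases hs with rfl | rfl
  · refine hnoatt _ ?_
    rintro p hp
    simp only [UU, Set.mem_insert_iff, Set.mem_singleton_iff] at hp
    rcases hp with rfl | rfl <;> simp [E2]
  · refine hnoatt _ ?_
    rintro p hp
    simp only [UU, Set.mem_insert_iff, Set.mem_singleton_iff] at hp
    rcases hp with rfl | rfl <;> simp [E2]

lemma ce_TA : ConfElim R2 TA := by
  rintro s hs
  simp only [TA, Set.mem_insert_iff, Set.mem_singleton_iff] at hs
  rcases hs with rfl | rfl | rfl | rfl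
  · refine not_defeats_of_no_strong ?_ (by norm_num)
    rintro p hp
    simp only [TA, Set.mem_insert_iff, Set.mem_singleton_iff] at hp
    rcases hp with rfl | rfl | rfl | rfl <;> simp [SE2]
  · refine not_defeats_of_no_strong ?_ (by norm_num)
    rintro p hp
    simp only [TA, Set.mem_insert_iff, Set.mem_singleton_iff] at hp
    rcases hp with rfl | rfl | rfl | rfl <;> simp [SE2]
  · refine not_defeats_of_no_att ?_
    rintro p hp
    simp only [TA, Set.mem_insert_iff, Set.mem_singleton_iff] at hp
    rcases hp with rfl | rfl | rfl | rfl <;> simp [E2]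
  · refine not_defeats_of_no_att ?_
    rintro p hp
    simp only [TA, Set.mem_insert_iff, Set.mem_singleton_iff] at hp
    rcases hp with rfl | rfl | rfl | rfl <;> simp [E2]

lemma ce_TB : ConfElim R2 TB := by
  rintro s hs
  simp only [TB, Set.mem_insert_iff, Set.mem_singleton_iff] at hs
  rcases hs with rfl | rfl | rfl | rfl
  · refine not_defeats_of_no_strong ?_ (by norm_num)
    rintro p hp
    simp only [TB, Set.mem_insert_iff, Set.mem_singleton_iff] at hp
    rcases hp with rfl | rfl | rfl | rfl <;> simp [SE2]
  · refine not_defeats_of_no_att ?_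
    rintro p hp
    simp only [TB, Set.mem_insert_iff, Set.mem_singleton_iff] at hp
    rcases hp with rfl | rfl | rfl | rfl <;> simp [E2]
  · refine not_defeats_of_no_att ?_
    rintro p hp
    simp only [TB, Set.mem_insert_iff, Set.mem_singleton_iff] at hp
    rcases hp with rfl | rfl | rfl | rfl <;> simp [E2]
  · refine not_defeats_of_no_att ?_
    rintro p hp
    simp only [TB, Set.mem_insert_iff, Set.mem_singleton_iff] at hp
    rcases hp with rfl | rfl | rfl | rfl <;> simp [E2]

lemma ce_TC : ConfElim R2 TC := by
  rintro s hs
  simp only [TC, Set.mem_insert_iff, Set.mem_singleton_iff] at hs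
  rcases hs with rfl | rfl | rfl | rfl
  · refine not_defeats_of_no_strong ?_ (by norm_num)
    rintro p hp
    simp only [TC, Set.mem_insert_iff, Set.mem_singleton_iff] at hp
    rcases hp with rfl | rfl | rfl | rfl <;> simp [SE2]
  · refine not_defeats_of_no_att ?_
    rintro p hp
    simp only [TC, Set.mem_insert_iff, Set.mem_singleton_iff] at hp
    rcases hp with rfl | rfl | rfl | rfl <;> simp [E2]
  · refine not_defeats_of_no_att ?_
    rintro p hp
    simp only [TC, Set.mem_insert_iff, Set.mem_singleton_iff] at hp
    rcases hp with rfl | rfl | rfl | rfl <;> simp [E2]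
  · refine not_defeats_of_no_att ?_
    rintro p hp
    simp only [TC, Set.mem_insert_iff, Set.mem_singleton_iff] at hp
    rcases hp with rfl | rfl | rfl | rfl <;> simp [E2]

/- Vmax computations -/
lemma vP1 : Vmax R2 P1 ((0:ℕ),2) = 0 := by
  refine vmax_eq_zero ?_
  rintro p hp
  simp only [P1, Set.mem_singleton_iff] at hp; subst hp; simp [E2]

lemma vP2 : Vmax R2 P2 ((1:ℕ),2) = 0 := by
  refine vmax_eq_zero ?_
  rintro p hp
  simp only [P2, Set.mem_singleton_iff] at hp; subst hp; simp [E2]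

lemma vUU0 : Vmax R2 UU ((0:ℕ),2) = 0 := by
  refine vmax_eq_zero ?_
  rintro p hp
  simp only [UU, Set.mem_insert_iff, Set.mem_singleton_iff] at hp
  rcases hp with rfl | rfl <;> simp [E2]

lemma vUU1 : Vmax R2 UU ((1:ℕ),2) = 0 := by
  refine vmax_eq_zero ?_
  rintro p hp
  simp only [UU, Set.mem_insert_iff, Set.mem_singleton_iff] at hp
  rcases hp with rfl | rfl <;> simp [E2]

lemma vTA0 : Vmax R2 TA ((0:ℕ),2) = 1 := by
  refine vmax_eq_one (p := ((5:ℕ),1)) (by simp [TA]) ⟨by norm_num, by simp [E2]⟩ ?_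
  rintro q hq
  simp only [TA, Set.mem_insert_iff, Set.mem_singleton_iff] at hq
  rcases hq with rfl | rfl | rfl | rfl <;> simp [SE2]

lemma vTA1 : Vmax R2 TA ((1:ℕ),2) = 1 := by
  refine vmax_eq_one (p := ((4:ℕ),1)) (by simp [TA]) ⟨by norm_num, by simp [E2]⟩ ?_
  rintro q hq
  simp only [TA, Set.mem_insert_iff, Set.mem_singleton_iff] at hq
  rcases hq with rfl | rfl | rfl | rfl <;> simp [SE2]

lemma vTA4 : Vmax R2 TA ((4:ℕ),1) = 0 := by
  refine vmax_eq_zero ?_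
  rintro p hp
  simp only [TA, Set.mem_insert_iff, Set.mem_singleton_iff] at hp
  rcases hp with rfl | rfl | rfl | rfl <;> simp [E2]

lemma vTA5 : Vmax R2 TA ((5:ℕ),1) = 0 := by
  refine vmax_eq_zero ?_
  rintro p hp
  simp only [TA, Set.mem_insert_iff, Set.mem_singleton_iff] at hp
  rcases hp with rfl | rfl | rfl | rfl <;> simp [E2]

lemma vTB0 : Vmax R2 TB ((0:ℕ),2) = 1 := by
  refine vmax_eq_one (p := ((5:ℕ),1)) (by simp [TB]) ⟨by norm_num, by simp [E2]⟩ ?_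
  rintro q hq
  simp only [TB, Set.mem_insert_iff, Set.mem_singleton_iff] at hq
  rcases hq with rfl | rfl | rfl | rfl <;> simp [SE2]

lemma vTB2 : Vmax R2 TB ((2:ℕ),2) = 0 := by
  refine vmax_eq_zero ?_
  rintro p hp
  simp only [TB, Set.mem_insert_iff, Set.mem_singleton_iff] at hp
  rcases hp with rfl | rfl | rfl | rfl <;> simp [E2]

lemma vTB4 : Vmax R2 TB ((4:ℕ),1) = 0 := by
  refine vmax_eq_zero ?_
  rintro p hp
  simp only [TB, Set.mem_insert_iff, Set.mem_singleton_iff] at hp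
  rcases hp with rfl | rfl | rfl | rfl <;> simp [E2]

lemma vTB5 : Vmax R2 TB ((5:ℕ),1) = 0 := by
  refine vmax_eq_zero ?_
  rintro p hp
  simp only [TB, Set.mem_insert_iff, Set.mem_singleton_iff] at hp
  rcases hp with rfl | rfl | rfl | rfl <;> simp [E2]

lemma vTC1 : Vmax R2 TC ((1:ℕ),2) = 1 := by
  refine vmax_eq_one (p := ((4:ℕ),1)) (by simp [TC]) ⟨by norm_num, by simp [E2]⟩ ?_
  rintro q hq
  simp only [TC, Set.mem_insert_iff, Set.mem_singleton_iff] at hq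
  rcases hq with rfl | rfl | rfl | rfl <;> simp [SE2]

lemma vTC3 : Vmax R2 TC ((3:ℕ),2) = 0 := by
  refine vmax_eq_zero ?_
  rintro p hp
  simp only [TC, Set.mem_insert_iff, Set.mem_singleton_iff] at hp
  rcases hp with rfl | rfl | rfl | rfl <;> simp [E2]

lemma vTC4 : Vmax R2 TC ((4:ℕ),1) = 0 := by
  refine vmax_eq_zero ?_
  rintro p hp
  simp only [TC, Set.mem_insert_iff, Set.mem_singleton_iff] at hp
  rcases hp with rfl | rfl | rfl | rfl <;> simp [E2]

lemma vTC5 : Vmax R2 TC ((5:ℕ),1) = 0 := by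
  refine vmax_eq_zero ?_
  rintro p hp
  simp only [TC, Set.mem_insert_iff, Set.mem_singleton_iff] at hp
  rcases hp with rfl | rfl | rfl | rfl <;> simp [E2]

/- alpha computations -/
lemma alpha_P1 : alpha R2 P1 = P1 := by
  show (fun s => (s.1, s.2 - Vmax R2 P1 s)) '' {((0:ℕ),2)} = P1
  rw [Set.image_singleton]
  simp only [vP1]
  rfl

lemma alpha_P2 : alpha R2 P2 = P2 := by
  show (fun s => (s.1, s.2 - Vmax R2 P2 s)) '' {((1:ℕ),2)} = P2
  rw [Set.image_singleton]
  simp only [vP2]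
  rfl

lemma alpha_UU : alpha R2 UU = UU := by
  show (fun s => (s.1, s.2 - Vmax R2 UU s)) '' {((0:ℕ),2),((1:ℕ),2)} = UU
  rw [Set.image_insert_eq, Set.image_singleton]
  simp only [vUU0, vUU1]
  rfl

lemma alpha_TA : alpha R2 TA = {(0,1),(1,1),(4,1),(5,1)} := by
  show (fun s => (s.1, s.2 - Vmax R2 TA s)) ''
    {((0:ℕ),2),((1:ℕ),2),((4:ℕ),1),((5:ℕ),1)} = _
  rw [Set.image_insert_eq, Set.image_insert_eq, Set.image_insert_eq,
    Set.image_singleton]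
  simp only [vTA0, vTA1, vTA4, vTA5]

lemma alpha_TB : alpha R2 TB = {(0,1),(2,2),(4,1),(5,1)} := by
  show (fun s => (s.1, s.2 - Vmax R2 TB s)) ''
    {((0:ℕ),2),((2:ℕ),2),((4:ℕ),1),((5:ℕ),1)} = _
  rw [Set.image_insert_eq, Set.image_insert_eq, Set.image_insert_eq,
    Set.image_singleton]
  simp only [vTB0, vTB2, vTB4, vTB5]

lemma alpha_TC : alpha R2 TC = {(1,1),(3,2),(4,1),(5,1)} := by
  show (fun s => (s.1, s.2 - Vmax R2 TC s)) ''
    {((1:ℕ),2),((3:ℕ),2),((4:ℕ),1),((5:ℕ),1)} = _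
  rw [Set.image_insert_eq, Set.image_insert_eq, Set.image_insert_eq,
    Set.image_singleton]
  simp only [vTC1, vTC3, vTC4, vTC5]

/- c-attack refutations -/
lemma nca_gen {X L : Set (Arg ℕ)} (hL : alpha (edgeR E2 SE2) X = L) {s : Arg ℕ}
    (h : ∀ q ∈ L, ¬(0 < q.2 ∧ E2 q.1 s.1)) : ¬ CAttacks R2 X s :=
  not_cattacks (by rw [hL]; exact h)

lemma nca_P1_w : ¬ CAttacks R2 P1 ((2:ℕ),2) := by
  refine nca_gen alpha_P1 ?_
  rintro q hq
  simp only [P1, Set.mem_singleton_iff] at hq; subst hq; simp [E2]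

lemma nca_P1_f : ¬ CAttacks R2 P1 ((5:ℕ),1) := by
  refine nca_gen alpha_P1 ?_
  rintro q hq
  simp only [P1, Set.mem_singleton_iff] at hq; subst hq; simp [E2]

lemma nca_P2_v : ¬ CAttacks R2 P2 ((3:ℕ),2) := by
  refine nca_gen alpha_P2 ?_
  rintro q hq
  simp only [P2, Set.mem_singleton_iff] at hq; subst hq; simp [E2]

lemma nca_P2_e : ¬ CAttacks R2 P2 ((4:ℕ),1) := by
  refine nca_gen alpha_P2 ?_
  rintro q hq
  simp only [P2, Set.mem_singleton_iff] at hq; subst hq; simp [E2]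

lemma nca_UU_e : ¬ CAttacks R2 UU ((4:ℕ),1) := by
  refine nca_gen alpha_UU ?_
  rintro q hq
  simp only [UU, Set.mem_insert_iff, Set.mem_singleton_iff] at hq
  rcases hq with rfl | rfl <;> simp [E2]

lemma nca_UU_f : ¬ CAttacks R2 UU ((5:ℕ),1) := by
  refine nca_gen alpha_UU ?_
  rintro q hq
  simp only [UU, Set.mem_insert_iff, Set.mem_singleton_iff] at hq
  rcases hq with rfl | rfl <;> simp [E2]

lemma nca_TA_e : ¬ CAttacks R2 TA ((4:ℕ),1) := by
  refine nca_gen alpha_TA ?_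
  rintro q hq
  simp only [Set.mem_insert_iff, Set.mem_singleton_iff] at hq
  rcases hq with rfl | rfl | rfl | rfl <;> simp [E2]

/- c-defeat facts -/
lemma cd_UU_w : CDefeats R2 UU ((2:ℕ),2) := by
  refine cdefeats_of_strong (q := ((1:ℕ),2)) ce_UU ?_ (by simp [E2]) (by simp [SE2])
    (by norm_num) ?_ (by norm_num)
  · rw [show alpha (edgeR E2 SE2) UU = UU from alpha_UU]; simp [UU]
  · simp only [UU, Set.mem_insert_iff, Set.mem_singleton_iff, Prod.mk.injEq]
    norm_num

lemma cd_UU_v : CDefeats R2 UU ((3:ℕ),2) := by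
  refine cdefeats_of_strong (q := ((0:ℕ),2)) ce_UU ?_ (by simp [E2]) (by simp [SE2])
    (by norm_num) ?_ (by norm_num)
  · rw [show alpha (edgeR E2 SE2) UU = UU from alpha_UU]; simp [UU]
  · simp only [UU, Set.mem_insert_iff, Set.mem_singleton_iff, Prod.mk.injEq]
    norm_num

lemma ncd_P1_w : ¬ CDefeats R2 P1 ((2:ℕ),2) := not_cdefeats_of_not_cattacks nca_P1_w
lemma ncd_P1_f : ¬ CDefeats R2 P1 ((5:ℕ),1) := not_cdefeats_of_not_cattacks nca_P1_f
lemma ncd_P2_v : ¬ CDefeats R2 P2 ((3:ℕ),2) := not_cdefeats_of_not_cattacks nca_P2_v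
lemma ncd_P2_e : ¬ CDefeats R2 P2 ((4:ℕ),1) := not_cdefeats_of_not_cattacks nca_P2_e
lemma ncd_UU_e : ¬ CDefeats R2 UU ((4:ℕ),1) := not_cdefeats_of_not_cattacks nca_UU_e
lemma ncd_UU_f : ¬ CDefeats R2 UU ((5:ℕ),1) := not_cdefeats_of_not_cattacks nca_UU_f

lemma ncd_gen {X L : Set (Arg ℕ)} (hL : alpha (edgeR E2 SE2) X = L) {s : Arg ℕ}
    (h : ∀ q ∈ L, ¬(SE2 q.1 s.1 ∧ 2 ≤ q.2)) (hcap : 2 ≤ s.2) :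
    ¬ CDefeats R2 X s :=
  not_cdefeats_of_no_strong (by rw [hL]; exact h) hcap

lemma ncd_TA_w : ¬ CDefeats R2 TA ((2:ℕ),2) := by
  refine ncd_gen alpha_TA ?_ (by norm_num)
  rintro q hq
  simp only [Set.mem_insert_iff, Set.mem_singleton_iff] at hq
  rcases hq with rfl | rfl | rfl | rfl <;> simp [SE2]

lemma ncd_TA_v : ¬ CDefeats R2 TA ((3:ℕ),2) := by
  refine ncd_gen alpha_TA ?_ (by norm_num)
  rintro q hq
  simp only [Set.mem_insert_iff, Set.mem_singleton_iff] at hq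
  rcases hq with rfl | rfl | rfl | rfl <;> simp [SE2]

lemma ncd_TB_u' : ¬ CDefeats R2 TB ((1:ℕ),2) := by
  refine ncd_gen alpha_TB ?_ (by norm_num)
  rintro q hq
  simp only [Set.mem_insert_iff, Set.mem_singleton_iff] at hq
  rcases hq with rfl | rfl | rfl | rfl <;> simp [SE2]

lemma ncd_TC_u : ¬ CDefeats R2 TC ((0:ℕ),2) := by
  refine ncd_gen alpha_TC ?_ (by norm_num)
  rintro q hq
  simp only [Set.mem_insert_iff, Set.mem_singleton_iff] at hq
  rcases hq with rfl | rfl | rfl | rfl <;> simp [SE2]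

/- one-directional attackedness -/
lemma od_P1 : OneDirAttacked R2 SB P1 := by
  refine onedir_of (s := ((0:ℕ),2)) (sx := ((2:ℕ),2)) ce_P1 ?_ rfl
    (attacks_singleton_iff.mpr ⟨by norm_num, by simp [E2]⟩) nca_P1_w
  refine Or.inl ⟨m2SB, ?_⟩
  simp only [P1, Set.mem_singleton_iff, Prod.mk.injEq]
  norm_num

lemma od_P2 : OneDirAttacked R2 SB P2 := by
  refine onedir_of (s := ((1:ℕ),2)) (sx := ((3:ℕ),2)) ce_P2 ?_ rfl
    (attacks_singleton_iff.mpr ⟨by norm_num, by simp [E2]⟩) nca_P2_v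
  refine Or.inl ⟨m3SB, ?_⟩
  simp only [P2, Set.mem_singleton_iff, Prod.mk.injEq]
  norm_num

lemma od_UU : OneDirAttacked R2 SB UU := by
  refine onedir_of (s := ((1:ℕ),2)) (sx := ((4:ℕ),1)) ce_UU ?_ (by simp [UU])
    (attacks_singleton_iff.mpr ⟨by norm_num, by simp [E2]⟩) nca_UU_e
  refine Or.inl ⟨m4SB, ?_⟩
  simp only [UU, Set.mem_insert_iff, Set.mem_singleton_iff, Prod.mk.injEq]
  norm_num

lemma od_TA : OneDirAttacked R2 SB TA := by
  refine onedir_of (s := ((1:ℕ),2)) (sx := ((4:ℕ),1)) ce_TA ?_ (by simp [TA])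
    (attacks_singleton_iff.mpr ⟨by norm_num, by simp [E2]⟩) nca_TA_e
  refine Or.inr ?_
  rw [show alpha R2 TA = {(0,1),(1,1),(4,1),(5,1)} from alpha_TA]
  simp

/- UndefAtt computations -/
lemma mem_ua {X Y : Set (Arg ℕ)} {s : Arg ℕ} :
    s ∈ UndefAtt R2 SB X Y ↔
      (s ∈ SB ∧ ∃ s₁ ∈ X, 0 < s.2 ∧ E2 s.1 s₁.1) ∧
        ¬ CDefeats R2 Y s ∧ s ∉ Y :=
  mem_undefAtt_iff

lemma UA_P1_P1 : UndefAtt R2 SB P1 P1 = {((2:ℕ),2),((5:ℕ),1)} := by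
  ext s
  rw [mem_ua]
  constructor
  · rintro ⟨⟨hsS, s₁, hs₁, -, hE⟩, hncd, hnin⟩
    simp only [P1, Set.mem_singleton_iff] at hs₁; subst hs₁
    simp only [SB, Set.mem_insert_iff, Set.mem_singleton_iff] at hsS
    rcases hsS with rfl | rfl | rfl | rfl | rfl | rfl <;>
      first
        | (revert hE; simp [E2]; done)
        | simp
  · rintro hs
    simp only [Set.mem_insert_iff, Set.mem_singleton_iff] at hs
    rcases hs with rfl | rfl
    · exact ⟨⟨m2SB, ((0:ℕ),2), rfl, by norm_num, by simp [E2]⟩, ncd_P1_w,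
        by simp only [P1, Set.mem_singleton_iff, Prod.mk.injEq]; norm_num⟩
    · exact ⟨⟨m5SB, ((0:ℕ),2), rfl, by norm_num, by simp [E2]⟩, ncd_P1_f,
        by simp only [P1, Set.mem_singleton_iff, Prod.mk.injEq]; norm_num⟩

lemma UA_P1_UU : UndefAtt R2 SB P1 UU = {((5:ℕ),1)} := by
  ext s
  rw [mem_ua]
  constructor
  · rintro ⟨⟨hsS, s₁, hs₁, -, hE⟩, hncd, hnin⟩
    simp only [P1, Set.mem_singleton_iff] at hs₁; subst hs₁
    simp only [SB, Set.mem_insert_iff, Set.mem_singleton_iff] at hsS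
    rcases hsS with rfl | rfl | rfl | rfl | rfl | rfl <;>
      first
        | (revert hE; simp [E2]; done)
        | exact absurd cd_UU_w hncd
        | simp
  · rintro hs
    simp only [Set.mem_singleton_iff] at hs; subst hs
    exact ⟨⟨m5SB, ((0:ℕ),2), rfl, by norm_num, by simp [E2]⟩, ncd_UU_f,
      by simp only [UU, Set.mem_insert_iff, Set.mem_singleton_iff, Prod.mk.injEq];
         norm_num⟩

lemma UA_P1_TB : UndefAtt R2 SB P1 TB = ∅ := by
  rw [Set.eq_empty_iff_forall_notMem]
  intro s hs
  rw [mem_ua] at hs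
  obtain ⟨⟨hsS, s₁, hs₁, -, hE⟩, -, hnin⟩ := hs
  simp only [P1, Set.mem_singleton_iff] at hs₁; subst hs₁
  simp only [SB, Set.mem_insert_iff, Set.mem_singleton_iff] at hsS
  rcases hsS with rfl | rfl | rfl | rfl | rfl | rfl <;>
    first
      | (revert hE; simp [E2]; done)
      | (refine absurd ?_ hnin; simp [TB]; done)

lemma UA_P2_P2 : UndefAtt R2 SB P2 P2 = {((3:ℕ),2),((4:ℕ),1)} := by
  ext s
  rw [mem_ua]
  constructor
  · rintro ⟨⟨hsS, s₁, hs₁, -, hE⟩, hncd, hnin⟩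
    simp only [P2, Set.mem_singleton_iff] at hs₁; subst hs₁
    simp only [SB, Set.mem_insert_iff, Set.mem_singleton_iff] at hsS
    rcases hsS with rfl | rfl | rfl | rfl | rfl | rfl <;>
      first
        | (revert hE; simp [E2]; done)
        | simp
  · rintro hs
    simp only [Set.mem_insert_iff, Set.mem_singleton_iff] at hs
    rcases hs with rfl | rfl
    · exact ⟨⟨m3SB, ((1:ℕ),2), rfl, by norm_num, by simp [E2]⟩, ncd_P2_v,
        by simp only [P2, Set.mem_singleton_iff, Prod.mk.injEq]; norm_num⟩
    · exact ⟨⟨m4SB, ((1:ℕ),2), rfl, by norm_num, by simp [E2]⟩, ncd_P2_e,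
        by simp only [P2, Set.mem_singleton_iff, Prod.mk.injEq]; norm_num⟩

lemma UA_P2_UU : UndefAtt R2 SB P2 UU = {((4:ℕ),1)} := by
  ext s
  rw [mem_ua]
  constructor
  · rintro ⟨⟨hsS, s₁, hs₁, -, hE⟩, hncd, hnin⟩
    simp only [P2, Set.mem_singleton_iff] at hs₁; subst hs₁
    simp only [SB, Set.mem_insert_iff, Set.mem_singleton_iff] at hsS
    rcases hsS with rfl | rfl | rfl | rfl | rfl | rfl <;>
      first
        | (revert hE; simp [E2]; done)
        | exact absurd cd_UU_v hncd
        | simp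
  · rintro hs
    simp only [Set.mem_singleton_iff] at hs; subst hs
    exact ⟨⟨m4SB, ((1:ℕ),2), rfl, by norm_num, by simp [E2]⟩, ncd_UU_e,
      by simp only [UU, Set.mem_insert_iff, Set.mem_singleton_iff, Prod.mk.injEq];
         norm_num⟩

lemma UA_P2_TC : UndefAtt R2 SB P2 TC = ∅ := by
  rw [Set.eq_empty_iff_forall_notMem]
  intro s hs
  rw [mem_ua] at hs
  obtain ⟨⟨hsS, s₁, hs₁, -, hE⟩, -, hnin⟩ := hs
  simp only [P2, Set.mem_singleton_iff] at hs₁; subst hs₁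
  simp only [SB, Set.mem_insert_iff, Set.mem_singleton_iff] at hsS
  rcases hsS with rfl | rfl | rfl | rfl | rfl | rfl <;>
    first
      | (revert hE; simp [E2]; done)
      | (refine absurd ?_ hnin; simp [TC]; done)

lemma UA_UU_UU : UndefAtt R2 SB UU UU = {((4:ℕ),1),((5:ℕ),1)} := by
  ext s
  rw [mem_ua]
  constructor
  · rintro ⟨⟨hsS, s₁, hs₁, -, hE⟩, hncd, hnin⟩
    simp only [UU, Set.mem_insert_iff, Set.mem_singleton_iff] at hs₁
    simp only [SB, Set.mem_insert_iff, Set.mem_singleton_iff] at hsS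
    rcases hs₁ with rfl | rfl <;>
      rcases hsS with rfl | rfl | rfl | rfl | rfl | rfl <;>
        first
          | (revert hE; simp [E2]; done)
          | exact absurd cd_UU_w hncd
          | exact absurd cd_UU_v hncd
          | simp
  · rintro hs
    simp only [Set.mem_insert_iff, Set.mem_singleton_iff] at hs
    rcases hs with rfl | rfl
    · exact ⟨⟨m4SB, ((1:ℕ),2), by simp [UU], by norm_num, by simp [E2]⟩, ncd_UU_e,
        by simp only [UU, Set.mem_insert_iff, Set.mem_singleton_iff, Prod.mk.injEq];
           norm_num⟩
    · exact ⟨⟨m5SB, ((0:ℕ),2), by simp [UU], by norm_num, by simp [E2]⟩, ncd_UU_f,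
        by simp only [UU, Set.mem_insert_iff, Set.mem_singleton_iff, Prod.mk.injEq];
           norm_num⟩

lemma UA_UU_TA : UndefAtt R2 SB UU TA = {((2:ℕ),2),((3:ℕ),2)} := by
  ext s
  rw [mem_ua]
  constructor
  · rintro ⟨⟨hsS, s₁, hs₁, -, hE⟩, hncd, hnin⟩
    simp only [UU, Set.mem_insert_iff, Set.mem_singleton_iff] at hs₁
    simp only [SB, Set.mem_insert_iff, Set.mem_singleton_iff] at hsS
    rcases hs₁ with rfl | rfl <;>
      rcases hsS with rfl | rfl | rfl | rfl | rfl | rfl <;>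
        first
          | (revert hE; simp [E2]; done)
          | (refine absurd ?_ hnin; simp [TA]; done)
          | simp
  · rintro hs
    simp only [Set.mem_insert_iff, Set.mem_singleton_iff] at hs
    rcases hs with rfl | rfl
    · exact ⟨⟨m2SB, ((0:ℕ),2), by simp [UU], by norm_num, by simp [E2]⟩, ncd_TA_w,
        by simp only [TA, Set.mem_insert_iff, Set.mem_singleton_iff, Prod.mk.injEq];
           norm_num⟩
    · exact ⟨⟨m3SB, ((1:ℕ),2), by simp [UU], by norm_num, by simp [E2]⟩, ncd_TA_v,
        by simp only [TA, Set.mem_insert_iff, Set.mem_singleton_iff, Prod.mk.injEq];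
           norm_num⟩

lemma UA_TA_TA : UndefAtt R2 SB TA TA = {((2:ℕ),2),((3:ℕ),2)} := by
  ext s
  rw [mem_ua]
  constructor
  · rintro ⟨⟨hsS, s₁, hs₁, -, hE⟩, hncd, hnin⟩
    simp only [TA, Set.mem_insert_iff, Set.mem_singleton_iff] at hs₁
    simp only [SB, Set.mem_insert_iff, Set.mem_singleton_iff] at hsS
    rcases hs₁ with rfl | rfl | rfl | rfl <;>
      rcases hsS with rfl | rfl | rfl | rfl | rfl | rfl <;>
        first
          | (revert hE; simp [E2]; done)
          | (refine absurd ?_ hnin; simp [TA]; done)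
          | simp
  · rintro hs
    simp only [Set.mem_insert_iff, Set.mem_singleton_iff] at hs
    rcases hs with rfl | rfl
    · exact ⟨⟨m2SB, ((0:ℕ),2), by simp [TA], by norm_num, by simp [E2]⟩, ncd_TA_w,
        by simp only [TA, Set.mem_insert_iff, Set.mem_singleton_iff, Prod.mk.injEq];
           norm_num⟩
    · exact ⟨⟨m3SB, ((1:ℕ),2), by simp [TA], by norm_num, by simp [E2]⟩, ncd_TA_v,
        by simp only [TA, Set.mem_insert_iff, Set.mem_singleton_iff, Prod.mk.injEq];
           norm_num⟩

lemma UA_TB_TB : UndefAtt R2 SB TB TB = {((1:ℕ),2)} := by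
  ext s
  rw [mem_ua]
  constructor
  · rintro ⟨⟨hsS, s₁, hs₁, -, hE⟩, hncd, hnin⟩
    simp only [TB, Set.mem_insert_iff, Set.mem_singleton_iff] at hs₁
    simp only [SB, Set.mem_insert_iff, Set.mem_singleton_iff] at hsS
    rcases hs₁ with rfl | rfl | rfl | rfl <;>
      rcases hsS with rfl | rfl | rfl | rfl | rfl | rfl <;>
        first
          | (revert hE; simp [E2]; done)
          | (refine absurd ?_ hnin; simp [TB]; done)
          | simp
  · rintro hs
    simp only [Set.mem_singleton_iff] at hs; subst hs
    exact ⟨⟨m1SB, ((2:ℕ),2), by simp [TB], by norm_num, by simp [E2]⟩, ncd_TB_u',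
      by simp only [TB, Set.mem_insert_iff, Set.mem_singleton_iff, Prod.mk.injEq];
         norm_num⟩

lemma UA_TC_TC : UndefAtt R2 SB TC TC = {((0:ℕ),2)} := by
  ext s
  rw [mem_ua]
  constructor
  · rintro ⟨⟨hsS, s₁, hs₁, -, hE⟩, hncd, hnin⟩
    simp only [TC, Set.mem_insert_iff, Set.mem_singleton_iff] at hs₁
    simp only [SB, Set.mem_insert_iff, Set.mem_singleton_iff] at hsS
    rcases hs₁ with rfl | rfl | rfl | rfl <;>
      rcases hsS with rfl | rfl | rfl | rfl | rfl | rfl <;>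
        first
          | (revert hE; simp [E2]; done)
          | (refine absurd ?_ hnin; simp [TC]; done)
          | simp
  · rintro hs
    simp only [Set.mem_singleton_iff] at hs; subst hs
    exact ⟨⟨m0SB, ((3:ℕ),2), by simp [TC], by norm_num, by simp [E2]⟩, ncd_TC_u,
      by simp only [TC, Set.mem_insert_iff, Set.mem_singleton_iff, Prod.mk.injEq];
         norm_num⟩

/- cardinalities -/
lemma ncTA : TA.ncard = 4 := by
  have h : TA = insert ((0:ℕ),2) (insert ((1:ℕ),2) (insert ((4:ℕ),1) {((5:ℕ),1)})) := rfl
  rw [h, Set.ncard_insert_of_notMem (by simp), Set.ncard_insert_of_notMem (by simp),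
    Set.ncard_insert_of_notMem (by simp), Set.ncard_singleton]

lemma ncTB : TB.ncard = 4 := by
  have h : TB = insert ((0:ℕ),2) (insert ((2:ℕ),2) (insert ((4:ℕ),1) {((5:ℕ),1)})) := rfl
  rw [h, Set.ncard_insert_of_notMem (by simp), Set.ncard_insert_of_notMem (by simp),
    Set.ncard_insert_of_notMem (by simp), Set.ncard_singleton]

lemma ncTC : TC.ncard = 4 := by
  have h : TC = insert ((1:ℕ),2) (insert ((3:ℕ),2) (insert ((4:ℕ),1) {((5:ℕ),1)})) := rfl
  rw [h, Set.ncard_insert_of_notMem (by simp), Set.ncard_insert_of_notMem (by simp),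
    Set.ncard_insert_of_notMem (by simp), Set.ncard_singleton]

/- profitability -/
lemma prof_P1_UU : Profitable R2 SB P1 UU := by
  refine ⟨?_, stateLeq_of_onedir od_P1 ce_UU, ?_⟩
  · rintro p hp; simp only [P1, Set.mem_singleton_iff] at hp; subst hp; simp [UU]
  · show (UndefAtt R2 SB P1 UU).ncard ≤ (UndefAtt R2 SB P1 P1).ncard
    rw [UA_P1_UU, UA_P1_P1, Set.ncard_singleton, Set.ncard_pair (by decide)]
    omega

lemma prof_P2_UU : Profitable R2 SB P2 UU := by
  refine ⟨?_, stateLeq_of_onedir od_P2 ce_UU, ?_⟩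
  · rintro p hp; simp only [P2, Set.mem_singleton_iff] at hp; subst hp; simp [UU]
  · show (UndefAtt R2 SB P2 UU).ncard ≤ (UndefAtt R2 SB P2 P2).ncard
    rw [UA_P2_UU, UA_P2_P2, Set.ncard_singleton, Set.ncard_pair (by decide)]
    omega

lemma prof_UU_TA : Profitable R2 SB UU TA := by
  refine ⟨?_, stateLeq_of_onedir od_UU ce_TA, ?_⟩
  · rintro p hp
    simp only [UU, Set.mem_insert_iff, Set.mem_singleton_iff] at hp
    rcases hp with rfl | rfl <;> simp [TA]
  · show (UndefAtt R2 SB UU TA).ncard ≤ (UndefAtt R2 SB UU UU).ncard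
    rw [UA_UU_TA, UA_UU_UU, Set.ncard_pair (by decide), Set.ncard_pair (by decide)]

lemma prof_P1_TB : Profitable R2 SB P1 TB := by
  refine ⟨?_, stateLeq_of_onedir od_P1 ce_TB, ?_⟩
  · rintro p hp; simp only [P1, Set.mem_singleton_iff] at hp; subst hp; simp [TB]
  · show (UndefAtt R2 SB P1 TB).ncard ≤ (UndefAtt R2 SB P1 P1).ncard
    rw [UA_P1_TB]
    simp

lemma prof_P2_TC : Profitable R2 SB P2 TC := by
  refine ⟨?_, stateLeq_of_onedir od_P2 ce_TC, ?_⟩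
  · rintro p hp; simp only [P2, Set.mem_singleton_iff] at hp; subst hp; simp [TC]
  · show (UndefAtt R2 SB P2 TC).ncard ≤ (UndefAtt R2 SB P2 P2).ncard
    rw [UA_P2_TC]
    simp

/- maximal profitable extensions -/
lemma maxUU_eq : ∀ Sx ∈ MaxSet R2 SB UU, Sx = TA := by
  rintro Sx ⟨hsubS, hprof, hmax⟩
  have hUU : UU ⊆ Sx := hprof.1
  have hce : ConfElim R2 Sx := confElim_of_profitable hprof
  have h0 : ((0:ℕ),2) ∈ Sx := hUU (by simp [UU])
  have h1 : ((1:ℕ),2) ∈ Sx := hUU (by simp [UU])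
  have hsubTA : Sx ⊆ TA := by
    intro x hx
    have hxSB := hsubS hx
    simp only [SB, Set.mem_insert_iff, Set.mem_singleton_iff] at hxSB
    rcases hxSB with rfl | rfl | rfl | rfl | rfl | rfl
    · simp [TA]
    · simp [TA]
    · exact absurd (defeats_of_strong (p := ((1:ℕ),2)) h1 (by simp [E2])
        (by simp [SE2]) (by norm_num) (by norm_num)) (hce _ hx)
    · exact absurd (defeats_of_strong (p := ((0:ℕ),2)) h0 (by simp [E2])
        (by simp [SE2]) (by norm_num) (by norm_num)) (hce _ hx)
    · simp [TA]
    · simp [TA]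
  by_contra hne
  exact hmax TA (ssubset_of_subset_of_ne hsubTA hne) subTASB prof_UU_TA

lemma maxP1_TB : TB ∈ MaxSet R2 SB P1 := by
  refine ⟨subTBSB, prof_P1_TB, ?_⟩
  rintro Sy hss hsubS hprof
  obtain ⟨x, hxSy, hxTB⟩ := Set.exists_of_ssubset hss
  have hce := confElim_of_profitable hprof
  have hTBSy : TB ⊆ Sy := hss.subset
  have hxSB := hsubS hxSy
  simp only [SB, Set.mem_insert_iff, Set.mem_singleton_iff] at hxSB
  rcases hxSB with rfl | rfl | rfl | rfl | rfl | rfl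
  · exact hxTB (by simp [TB])
  · exact absurd (defeats_of_strong (s := ((2:ℕ),2)) (p := ((1:ℕ),2)) hxSy
      (by simp [E2]) (by simp [SE2]) (by norm_num) (by norm_num))
      (hce ((2:ℕ),2) (hTBSy (by simp [TB])))
  · exact hxTB (by simp [TB])
  · exact absurd (defeats_of_strong (p := ((0:ℕ),2)) (hTBSy (by simp [TB]))
      (by simp [E2]) (by simp [SE2]) (by norm_num) (by norm_num)) (hce _ hxSy)
  · exact hxTB (by simp [TB])
  · exact hxTB (by simp [TB])

lemma maxP2_TC : TC ∈ MaxSet R2 SB P2 := by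
  refine ⟨subTCSB, prof_P2_TC, ?_⟩
  rintro Sy hss hsubS hprof
  obtain ⟨x, hxSy, hxTC⟩ := Set.exists_of_ssubset hss
  have hce := confElim_of_profitable hprof
  have hTCSy : TC ⊆ Sy := hss.subset
  have hxSB := hsubS hxSy
  simp only [SB, Set.mem_insert_iff, Set.mem_singleton_iff] at hxSB
  rcases hxSB with rfl | rfl | rfl | rfl | rfl | rfl
  · exact absurd (defeats_of_strong (s := ((3:ℕ),2)) (p := ((0:ℕ),2)) hxSy
      (by simp [E2]) (by simp [SE2]) (by norm_num) (by norm_num))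
      (hce ((3:ℕ),2) (hTCSy (by simp [TC])))
  · exact hxTC (by simp [TC])
  · exact absurd (defeats_of_strong (p := ((1:ℕ),2)) (hTCSy (by simp [TC]))
      (by simp [E2]) (by simp [SE2]) (by norm_num) (by norm_num)) (hce _ hxSy)
  · exact hxTC (by simp [TC])
  · exact hxTC (by simp [TC])
  · exact hxTC (by simp [TC])

/- state rank of TA -/
lemma rdef_w_u : RDef R2 {((2:ℕ),2)} ((0:ℕ),2) := by
  refine edgeR_isSome_iff.mpr ⟨⟨_, rfl⟩, ?_⟩
  rintro p hp
  rw [Set.mem_singleton_iff] at hp; subst hp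
  exact ⟨by norm_num, by simp [E2]⟩

lemma ncadm_TA : ¬ CAdmissible R2 SB TA := by
  rintro ⟨-, h⟩
  have hview : ((2:ℕ),2) ∈ viewArgs R2 SB TA :=
    Or.inl ⟨m2SB, by
      simp only [TA, Set.mem_insert_iff, Set.mem_singleton_iff, Prod.mk.injEq]
      norm_num⟩
  obtain ⟨sx, hsx, hcd⟩ := h {((2:ℕ),2)} (Set.singleton_subset_iff.mpr hview)
    ((0:ℕ),2) (by simp [TA]) (attacks_singleton_iff.mpr ⟨by norm_num, by simp [E2]⟩)
    {((2:ℕ),2)} subset_rfl rdef_w_u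
  rw [Set.mem_singleton_iff] at hsx; subst hsx
  exact ncd_TA_w hcd

lemma rank_TA : stateRank R2 SB TA = 0 := by
  unfold stateRank
  rw [if_neg ncadm_TA, if_pos od_TA]

/- external attack counts -/
lemma extTA : extAttCount R2 SB TA = 2 := by
  unfold extAttCount; rw [UA_TA_TA]; exact Set.ncard_pair (by decide)

lemma extTB : extAttCount R2 SB TB = 1 := by
  unfold extAttCount; rw [UA_TB_TB]; exact Set.ncard_singleton _

lemma extTC : extAttCount R2 SB TC = 1 := by
  unfold extAttCount; rw [UA_TC_TC]; exact Set.ncard_singleton _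

/- the separation -/
lemma hUnion : P1 ∪ P2 = UU := by
  simp only [P1, P2, UU, Set.singleton_union]

lemma mem_M : P2 ∈ Msem R2 SB P1 :=
  ⟨subP2SB, by rw [hUnion]; exact prof_P1_UU, by rw [hUnion]; exact prof_P2_UU⟩

lemma notMem_WS : P2 ∉ WSsem R2 SB P1 := by
  rintro ⟨-, hcase⟩
  rw [hUnion] at hcase
  rcases hcase with ⟨-, Sx, hSx, hall⟩ | ⟨-, Sx, hSx, hall⟩
  · have hx := maxUU_eq Sx hSx
    subst hx
    obtain ⟨γ, hγne, hγlt⟩ := hall TB maxP1_TB Crit.f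
      ⟨by show extAttCount R2 SB TB ≤ extAttCount R2 SB TA
          rw [extTB, extTA]; omega,
       by intro hc
          have hc' : extAttCount R2 SB TA ≤ extAttCount R2 SB TB := hc
          rw [extTA, extTB] at hc'; omega⟩
    cases γ with
    | l => exact hγlt.2 (by show TA.ncard ≤ TB.ncard; rw [ncTA, ncTB])
    | b => exact hγlt.2 (by
        show stateRank R2 SB TA ≤ stateRank R2 SB TB
        rw [rank_TA]; exact Nat.zero_le _)
    | f => exact hγne rfl
  · have hx := maxUU_eq Sx hSx
    subst hx
    obtain ⟨γ, hγne, hγlt⟩ := hall TC maxP2_TC Crit.f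
      ⟨by show extAttCount R2 SB TC ≤ extAttCount R2 SB TA
          rw [extTC, extTA]; omega,
       by intro hc
          have hc' : extAttCount R2 SB TA ≤ extAttCount R2 SB TC := hc
          rw [extTA, extTC] at hc'; omega⟩
    cases γ with
    | l => exact hγlt.2 (by show TA.ncard ≤ TC.ncard; rw [ncTA, ncTC])
    | b => exact hγlt.2 (by
        show stateRank R2 SB TA ≤ stateRank R2 SB TC
        rw [rank_TA]; exact Nat.zero_le _)
    | f => exact hγne rfl

lemma dir2 : ∃ (F : AF ℕ) (S₁ : Set (Arg ℕ)),
    S₁ ⊆ F.args ∧ ConfElim F.att S₁ ∧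
    ¬ Msem F.att F.args S₁ ⊆ WSsem F.att F.args S₁ :=
  ⟨⟨SB, R2, coh2, att2⟩, P1, subP1SB, ce_P1, fun h => notMem_WS (h mem_M)⟩

end Dir2
end CoalitionArg
open CoalitionArg in
/-- `M` and `WS` are incomparable. -/
theorem M_WS_incomparable :
    (∃ (A : Type) (F : AF A) (S₁ : Set (Arg A)),
      S₁ ⊆ F.args ∧ ConfElim F.att S₁ ∧
      ¬ WSsem F.att F.args S₁ ⊆ Msem F.att F.args S₁) ∧
    (∃ (A : Type) (F : AF A) (S₁ : Set (Arg A)),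
      S₁ ⊆ F.args ∧ ConfElim F.att S₁ ∧
      ¬ Msem F.att F.args S₁ ⊆ WSsem F.att F.args S₁) := by
  exact ⟨(fun ⟨F, S₁, h⟩ => ⟨ℕ, F, S₁, h⟩) CoalitionArg.Dir1.dir1,
    (fun ⟨F, S₁, h⟩ => ⟨ℕ, F, S₁, h⟩) CoalitionArg.Dir2.dir2⟩
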